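/- arXiv:2206.02372 — 3 statements merged into one kernel-verified Lean document; each statement's English description precedes it below -/
import Mathlib

section
/- Let n ≥ 2 and r ≥ 1 be integers, let χ_1, …, χ_n be integers, let k_1, …, k_{n−1} be integers, and let w_1, …, w_n be rational numbers with 0 < w_i < 1 for each i and Σ_{i=1}^n w_i = 1. Set χ = Σ_{i=1}^n χ_i − (n−1)r. Assume (as rational numbers): χ_1 ≤ w_1·χ + k_1, χ_n ≤ w_n·χ + r, and χ_l ≤ w_l·χ + r + k_l for every l with 2 ≤ l ≤ n−1. Then for every j with 1 ≤ j ≤ n−1 one has (Σ_{i=1}^j w_i)·χ − Σ_{i=1}^{j−1} χ_i − Σ_{i=j+1}^{n−1} k_i + (j−1)r ≤ χ_j ≤ (Σ_{i=1}^j w_i)·χ − Σ_{i=1}^{j−1} χ_i + Σ_{i=1}^j k_i + (j−1)r. -/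
open Finset

private lemma icc_succ (a m : ℕ) : Finset.Icc (a + 1) m = Finset.Ioc a m := by
  ext x; simp [Nat.succ_le_iff]

private lemma split_Ioc (f : ℕ → ℚ) {a b c : ℕ} (h1 : a ≤ b) (h2 : b ≤ c) :
    ∑ i ∈ Finset.Ioc a c, f i = ∑ i ∈ Finset.Ioc a b, f i + ∑ i ∈ Finset.Ioc b c, f i := by
  rw [← Finset.Ioc_union_Ioc_eq_Ioc h1 h2, Finset.sum_union]
  rw [Finset.disjoint_left]
  intro x hx hy
  simp only [Finset.mem_Ioc] at hx hy
  omega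

private lemma Ioc_pred_self {j : ℕ} (hj : 1 ≤ j) : Finset.Ioc (j - 1) j = {j} := by
  ext x; simp [Finset.mem_Ioc]; omega

/-- Arithmetic core of Theorem 3.5 (semistable version): the slope inequalities
`μ_w(K̃_i) ≤ μ_w(E)` imply the bounds on each `χ_j`. -/
theorem stmt_0 (n : ℕ) (r : ℤ) (hn : 2 ≤ n) (hr : 1 ≤ r)
    (χ k : ℕ → ℤ) (w : ℕ → ℚ)
    (hw : ∀ i, 1 ≤ i → i ≤ n → 0 < w i ∧ w i < 1)
    (hwsum : ∑ i ∈ Finset.Icc 1 n, w i = 1)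
    (X : ℚ) (hX : X = (∑ i ∈ Finset.Icc 1 n, (χ i : ℚ)) - ((n : ℚ) - 1) * (r : ℚ))
    (h1 : (χ 1 : ℚ) ≤ w 1 * X + (k 1 : ℚ))
    (hlast : (χ n : ℚ) ≤ w n * X + (r : ℚ))
    (hmid : ∀ l, 2 ≤ l → l ≤ n - 1 → (χ l : ℚ) ≤ w l * X + (r : ℚ) + (k l : ℚ)) :
    ∀ j, 1 ≤ j → j ≤ n - 1 →
      ((∑ i ∈ Finset.Icc 1 j, w i) * X - (∑ i ∈ Finset.Icc 1 (j - 1), (χ i : ℚ))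
          - (∑ i ∈ Finset.Icc (j + 1) (n - 1), (k i : ℚ)) + ((j : ℚ) - 1) * (r : ℚ)
        ≤ (χ j : ℚ)) ∧
      ((χ j : ℚ) ≤ (∑ i ∈ Finset.Icc 1 j, w i) * X - (∑ i ∈ Finset.Icc 1 (j - 1), (χ i : ℚ))
          + (∑ i ∈ Finset.Icc 1 j, (k i : ℚ)) + ((j : ℚ) - 1) * (r : ℚ)) := by
  intro j hj hjn
  have hjn' : j + 1 ≤ n := by omega
  have hicc : ∀ m : ℕ, Finset.Icc 1 m = Finset.Ioc 0 m := fun m => icc_succ 0 m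
  rw [hicc] at hwsum hX
  simp only [hicc, icc_succ]
  -- cast facts
  have cj : ((j - 1 : ℕ) : ℚ) = (j : ℚ) - 1 := by
    rw [Nat.cast_sub hj]; simp
  have cn : ((n - 1 : ℕ) : ℚ) = (n : ℚ) - 1 := by
    rw [Nat.cast_sub (by omega)]; simp
  -- upper chain: sum over Ioc 0 j
  have upper : ∑ i ∈ Finset.Ioc 0 j, (χ i : ℚ) ≤
      (∑ i ∈ Finset.Ioc 0 j, w i) * X + (∑ i ∈ Finset.Ioc 0 j, (k i : ℚ))
        + ((j : ℚ) - 1) * (r : ℚ) := by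
    have s1 : ∑ i ∈ Finset.Ioc 1 j, (χ i : ℚ) ≤
        ∑ i ∈ Finset.Ioc 1 j, (w i * X + (r : ℚ) + (k i : ℚ)) := by
      apply Finset.sum_le_sum
      intro i hi
      rw [Finset.mem_Ioc] at hi
      exact hmid i (by omega) (by omega)
    have sexp : ∑ i ∈ Finset.Ioc 1 j, (w i * X + (r : ℚ) + (k i : ℚ)) =
        (∑ i ∈ Finset.Ioc 1 j, w i) * X + ((j : ℚ) - 1) * (r : ℚ)
          + ∑ i ∈ Finset.Ioc 1 j, (k i : ℚ) := by
      simp [Finset.sum_add_distrib, Finset.sum_mul, Nat.cast_sub hj]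
    have split : ∀ f : ℕ → ℚ, ∑ i ∈ Finset.Ioc 0 j, f i = f 1 + ∑ i ∈ Finset.Ioc 1 j, f i := by
      intro f
      rw [split_Ioc f (by omega : (0:ℕ) ≤ 1) hj]
      simp
    rw [split (fun i => (χ i : ℚ)), split w, split (fun i => (k i : ℚ))]
    rw [sexp] at s1
    nlinarith [s1, h1]
  -- lower chain: sum over Ioc j n
  have lower : ∑ i ∈ Finset.Ioc j n, (χ i : ℚ) ≤
      (∑ i ∈ Finset.Ioc j n, w i) * X + (∑ i ∈ Finset.Ioc j (n - 1), (k i : ℚ))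
        + ((n : ℚ) - (j : ℚ)) * (r : ℚ) := by
    have s1 : ∑ i ∈ Finset.Ioc j (n - 1), (χ i : ℚ) ≤
        ∑ i ∈ Finset.Ioc j (n - 1), (w i * X + (r : ℚ) + (k i : ℚ)) := by
      apply Finset.sum_le_sum
      intro i hi
      rw [Finset.mem_Ioc] at hi
      exact hmid i (by omega) (by omega)
    have sexp : ∑ i ∈ Finset.Ioc j (n - 1), (w i * X + (r : ℚ) + (k i : ℚ)) =
        (∑ i ∈ Finset.Ioc j (n - 1), w i) * X + ((n : ℚ) - 1 - (j : ℚ)) * (r : ℚ)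
          + ∑ i ∈ Finset.Ioc j (n - 1), (k i : ℚ) := by
      have : ((n - 1 - j : ℕ) : ℚ) = (n : ℚ) - 1 - (j : ℚ) := by
        rw [Nat.cast_sub (by omega), Nat.cast_sub (by omega)]; simp
      simp [Finset.sum_add_distrib, Finset.sum_mul, this]
    have split : ∀ f : ℕ → ℚ, ∑ i ∈ Finset.Ioc j n, f i
        = ∑ i ∈ Finset.Ioc j (n - 1), f i + f n := by
      intro f
      rw [split_Ioc f (by omega : j ≤ n - 1) (by omega : n - 1 ≤ n)]
      have : Finset.Ioc (n - 1) n = {n} := Ioc_pred_self (by omega)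
      rw [this]; simp
    rw [split (fun i => (χ i : ℚ)), split w]
    rw [sexp] at s1
    nlinarith [s1, hlast]
  -- global splits
  have splitχ : ∑ i ∈ Finset.Ioc 0 n, (χ i : ℚ)
      = ∑ i ∈ Finset.Ioc 0 j, (χ i : ℚ) + ∑ i ∈ Finset.Ioc j n, (χ i : ℚ) :=
    split_Ioc _ (by omega) (by omega)
  have splitw : (1 : ℚ) = ∑ i ∈ Finset.Ioc 0 j, w i + ∑ i ∈ Finset.Ioc j n, w i := by
    rw [← hwsum]; exact split_Ioc _ (by omega) (by omega)
  have splitj : ∑ i ∈ Finset.Ioc 0 j, (χ i : ℚ)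
      = ∑ i ∈ Finset.Ioc 0 (j - 1), (χ i : ℚ) + (χ j : ℚ) := by
    rw [split_Ioc _ (by omega : (0:ℕ) ≤ j - 1) (by omega : j - 1 ≤ j), Ioc_pred_self hj]
    simp
  have hprod : (∑ i ∈ Finset.Ioc j n, w i) * X = X - (∑ i ∈ Finset.Ioc 0 j, w i) * X := by
    linear_combination (-X) * splitw
  constructor
  · nlinarith [lower, splitχ, splitj, hX, hprod, cn]
  · nlinarith [upper, splitj]
end

section
/- Let n ≥ 2 and r ≥ 1 be integers, let χ_1, …, χ_n be integers, let k_1, …, k_{n−1} be integers, and let w_1, …, w_n be rational numbers with 0 < w_i < 1 for each i and Σ_{i=1}^n w_i = 1. Set χ = Σ_{i=1}^n χ_i − (n−1)r. Assume (as rational numbers) the strict inequalities: χ_1 < w_1·χ + k_1, χ_n < w_n·χ + r, and χ_l < w_l·χ + r + k_l for every l with 2 ≤ l ≤ n−1. Then for every j with 1 ≤ j ≤ n−1 one has the strict inequalities (Σ_{i=1}^j w_i)·χ − Σ_{i=1}^{j−1} χ_i − Σ_{i=j+1}^{n−1} k_i + (j−1)r < χ_j < (Σ_{i=1}^j w_i)·χ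 − Σ_{i=1}^{j−1} χ_i + Σ_{i=1}^j k_i + (j−1)r. -/
/-- Arithmetic core of Theorem 3.5 (stable version): the strict slope inequalities
`μ_w(K̃_i) < μ_w(E)` imply the strict bounds on each `χ_j`. -/
theorem stmt_1 (n : ℕ) (r : ℤ) (hn : 2 ≤ n) (hr : 1 ≤ r)
    (χ k : ℕ → ℤ) (w : ℕ → ℚ)
    (hw : ∀ i, 1 ≤ i → i ≤ n → 0 < w i ∧ w i < 1)
    (hwsum : ∑ i ∈ Finset.Icc 1 n, w i = 1)
    (X : ℚ) (hX : X = (∑ i ∈ Finset.Icc 1 n, (χ i : ℚ)) - ((n : ℚ) - 1) * (r : ℚ))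
    (h1 : (χ 1 : ℚ) < w 1 * X + (k 1 : ℚ))
    (hlast : (χ n : ℚ) < w n * X + (r : ℚ))
    (hmid : ∀ l, 2 ≤ l → l ≤ n - 1 → (χ l : ℚ) < w l * X + (r : ℚ) + (k l : ℚ)) :
    ∀ j, 1 ≤ j → j ≤ n - 1 →
      ((∑ i ∈ Finset.Icc 1 j, w i) * X - (∑ i ∈ Finset.Icc 1 (j - 1), (χ i : ℚ))
          - (∑ i ∈ Finset.Icc (j + 1) (n - 1), (k i : ℚ)) + ((j : ℚ) - 1) * (r : ℚ)
        < (χ j : ℚ)) ∧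
      ((χ j : ℚ) < (∑ i ∈ Finset.Icc 1 j, w i) * X - (∑ i ∈ Finset.Icc 1 (j - 1), (χ i : ℚ))
          + (∑ i ∈ Finset.Icc 1 j, (k i : ℚ)) + ((j : ℚ) - 1) * (r : ℚ)) := by
  -- head partial sums
  have key_head : ∀ j, 1 ≤ j → j ≤ n - 1 →
      (∑ i ∈ Finset.Icc 1 j, (χ i : ℚ)) <
        (∑ i ∈ Finset.Icc 1 j, w i) * X + ((j : ℚ) - 1) * (r : ℚ)
          + ∑ i ∈ Finset.Icc 1 j, (k i : ℚ) := by
    intro j hj1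
    induction j, hj1 using Nat.le_induction with
    | base =>
      intro _
      simpa using h1
    | succ j hj ih =>
      intro hjn
      have ih' := ih (by omega)
      have hm := hmid (j + 1) (by omega) hjn
      rw [Finset.sum_Icc_succ_top (by omega), Finset.sum_Icc_succ_top (by omega),
        Finset.sum_Icc_succ_top (by omega), add_mul]
      push_cast
      push_cast at ih'
      linarith
  -- tail partial sums
  have key_tail : ∀ d : ℕ, ∀ a, a = n - d → 2 ≤ a → a ≤ n →
      (∑ i ∈ Finset.Icc a n, (χ i : ℚ)) <
        (∑ i ∈ Finset.Icc a n, w i) * X + ((n : ℚ) - (a : ℚ) + 1) * (r : ℚ)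
          + ∑ i ∈ Finset.Icc a (n - 1), (k i : ℚ) := by
    intro d
    induction d with
    | zero =>
      intro a ha h2 hn'
      have han : a = n := by omega
      subst han
      have he : Finset.Icc a (a - 1) = (∅ : Finset ℕ) := by
        apply Finset.Icc_eq_empty; omega
      rw [he, Finset.Icc_self]
      simp only [Finset.sum_singleton, Finset.sum_empty, add_zero]
      have hco : ((a : ℚ) - (a : ℚ) + 1) * (r : ℚ) = (r : ℚ) := by ring
      rw [hco]
      exact hlast
    | succ d ih =>
      intro a ha h2 hn'
      have hlt : a < n := by omega
      have ih' := ih (a + 1) (by omega) (by omega) (by omega)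
      have hm := hmid a h2 (by omega)
      have e1 : Finset.Icc a n = insert a (Finset.Icc (a + 1) n) := by
        ext x; simp only [Finset.mem_Icc, Finset.mem_insert]; omega
      have e2 : Finset.Icc a (n - 1) = insert a (Finset.Icc (a + 1) (n - 1)) := by
        ext x; simp only [Finset.mem_Icc, Finset.mem_insert]; omega
      have hna : a ∉ Finset.Icc (a + 1) n := by simp
      have hna2 : a ∉ Finset.Icc (a + 1) (n - 1) := by simp
      rw [e1, e2, Finset.sum_insert hna, Finset.sum_insert hna, Finset.sum_insert hna2, add_mul]
      push_cast at ih' ⊢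
      linarith
  -- main argument
  intro j hj1 hjn
  obtain ⟨m, rfl⟩ : ∃ m, j = m + 1 := ⟨j - 1, by omega⟩
  have hd := key_head (m + 1) (by omega) hjn
  have ht := key_tail (n - (m + 2)) (m + 2) (by omega) (by omega) (by omega)
  have sgen : ∀ f : ℕ → ℚ, (∑ i ∈ Finset.Icc 1 (m + 1), f i)
      + ∑ i ∈ Finset.Icc (m + 2) n, f i = ∑ i ∈ Finset.Icc 1 n, f i := by
    intro f
    have h1' : Finset.Icc 1 (m + 1) = Finset.Ioc 0 (m + 1) := by
      ext x; simp only [Finset.mem_Icc, Finset.mem_Ioc]; omega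
    have h2' : Finset.Icc (m + 2) n = Finset.Ioc (m + 1) n := by
      ext x; simp only [Finset.mem_Icc, Finset.mem_Ioc]; omega
    have h3' : Finset.Icc 1 n = Finset.Ioc 0 n := by
      ext x; simp only [Finset.mem_Icc, Finset.mem_Ioc]; omega
    rw [h1', h2', h3']
    exact Finset.sum_Ioc_consecutive f (by omega) (by omega)
  have sχ := sgen (fun i => (χ i : ℚ))
  have sw := sgen w
  rw [hwsum] at sw
  have hW : (∑ i ∈ Finset.Icc (m + 2) n, w i) * X
      = X - (∑ i ∈ Finset.Icc 1 (m + 1), w i) * X := by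
    rw [show (∑ i ∈ Finset.Icc (m + 2) n, w i)
        = 1 - ∑ i ∈ Finset.Icc 1 (m + 1), w i by linarith]
    ring
  have hT : (∑ i ∈ Finset.Icc 1 n, (χ i : ℚ)) = X + ((n : ℚ) - 1) * (r : ℚ) := by
    rw [hX]; ring
  have hsplit : (∑ i ∈ Finset.Icc 1 (m + 1), (χ i : ℚ))
      = (∑ i ∈ Finset.Icc 1 m, (χ i : ℚ)) + (χ (m + 1) : ℚ) :=
    Finset.sum_Icc_succ_top (by omega) _
  rw [hW] at ht
  rw [hsplit] at hd
  constructor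
  · simp only [Nat.add_sub_cancel, show m + 1 + 1 = m + 2 from rfl]
    push_cast at ht hT hsplit sχ ⊢
    linarith [sχ, hT, hsplit, ht]
  · simp only [Nat.add_sub_cancel]
    push_cast at hd ⊢
    linarith
end

section
/- Fix integers n ≥ 2 and r ≥ 2, and let χ_1, …, χ_n be integers such that for every nonempty subset I ⊆ {1, …, n} one has Σ_{i∈I} χ_i > (|I|−1)r, where |I| is the cardinality of I. Set χ = Σ_{i=1}^n χ_i − (n−1)r (so χ > 0). Then there exist rational numbers w_1, …, w_n with 0 < w_i < 1 for each i and Σ_{i=1}^n w_i = 1 such that for every j with 1 ≤ j ≤ n−1, (Σ_{i=1}^j w_i)·χ − Σ_{i=1}^{j−1} χ_i + r(j−1) < χ_j < (Σ_{i=1}^j w_i)·χ − Σ_{i=1}^{j−1} χ_i + rj (inequalities of rational numbers). -/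
/-- Case 3 (χ > 0) of Theorem 5.1: if `∑_{i∈I} χ_i > (|I|-1)r` for every nonempty
subset `I ⊆ {1,…,n}`, then there exists a polarization satisfying the
semistability inequalities. -/
theorem stmt_4 (n : ℕ) (r : ℤ) (hn : 2 ≤ n) (hr : 2 ≤ r)
    (χ : ℕ → ℤ)
    (hsub : ∀ I : Finset ℕ, I ⊆ Finset.Icc 1 n → I.Nonempty →
      ((I.card : ℤ) - 1) * r < ∑ i ∈ I, χ i)
    (X : ℚ) (hX : X = (∑ i ∈ Finset.Icc 1 n, (χ i : ℚ)) - ((n : ℚ) - 1) * (r : ℚ)) :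
    ∃ w : ℕ → ℚ,
      (∀ i, 1 ≤ i → i ≤ n → 0 < w i ∧ w i < 1) ∧
      (∑ i ∈ Finset.Icc 1 n, w i = 1) ∧
      (∀ j, 1 ≤ j → j ≤ n - 1 →
        ((∑ i ∈ Finset.Icc 1 j, w i) * X - (∑ i ∈ Finset.Icc 1 (j - 1), (χ i : ℚ))
            + (r : ℚ) * ((j : ℚ) - 1) < (χ j : ℚ)) ∧
        ((χ j : ℚ) < (∑ i ∈ Finset.Icc 1 j, w i) * X - (∑ i ∈ Finset.Icc 1 (j - 1), (χ i : ℚ))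
            + (r : ℚ) * (j : ℚ))) := by
  classical
  set S : ℕ → ℤ := fun j => ∑ i ∈ Finset.Icc 1 j, χ i with hSdef
  have hIoc : ∀ k, S k = ∑ t ∈ Finset.Ioc 0 k, χ t := by
    intro k; rw [hSdef]; rw [← Finset.Icc_add_one_left_eq_Ioc]; rfl
  -- key interval inequality
  have key : ∀ i j : ℕ, i < j → j ≤ n → S i - r * i < S j - r * ((j : ℤ) - 1) := by
    intro i j hij hjn
    have hsplit : S i + ∑ t ∈ Finset.Ioc i j, χ t = S j := by
      rw [hIoc, hIoc]
      exact Finset.sum_Ioc_consecutive _ (Nat.zero_le i) (le_of_lt hij)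
    have hI := hsub (Finset.Ioc i j) ?_ ?_
    · rw [Nat.card_Ioc] at hI
      have hcast : ((j - i : ℕ) : ℤ) = (j : ℤ) - i := by
        have := le_of_lt hij; push_cast [this]; ring
      rw [hcast] at hI
      linarith
    · intro t ht
      simp only [Finset.mem_Ioc] at ht
      simp only [Finset.mem_Icc]
      omega
    · exact Finset.nonempty_Ioc.mpr hij
  set Z : ℤ := S n - ((n : ℤ) - 1) * r with hZdef
  have hS0 : S 0 = 0 := by simp [hSdef]
  have hZpos : 0 < Z := by
    have h := key 0 n (by omega) le_rfl
    rw [hS0] at h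
    have hcomm : ((n : ℤ) - 1) * r = r * ((n : ℤ) - 1) := mul_comm _ _
    rw [hZdef]
    push_cast at h
    linarith
  have hXZ : X = (Z : ℚ) := by
    rw [hX, hZdef, hSdef]
    push_cast
    ring
  set c : ℕ → ℤ := fun j =>
    (Finset.range (j + 1)).sup' (Finset.nonempty_range_iff.mpr (Nat.succ_ne_zero j))
      (fun i => S i - r * i) with hcdef
  have hc_mem : ∀ i j : ℕ, i ≤ j → S i - r * i ≤ c j := by
    intro i j hij
    exact Finset.le_sup' (fun i => S i - r * (i : ℤ))
      (Finset.mem_range.mpr (Nat.lt_succ_of_le hij))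
  have hc_nonneg : ∀ j, 0 ≤ c j := by
    intro j
    have := hc_mem 0 j (Nat.zero_le j)
    rw [hS0] at this; simpa using this
  have hc_mono : ∀ i j : ℕ, i ≤ j → c i ≤ c j := by
    intro i j hij
    exact Finset.sup'_mono _ (Finset.range_subset_range.mpr (by omega)) _
  have hc_lt_b : ∀ j, 1 ≤ j → j ≤ n → c j + 1 ≤ S j - r * ((j : ℤ) - 1) := by
    intro j h1 h2
    have : c j < S j - r * ((j : ℤ) - 1) := by
      rw [hcdef]
      rw [Finset.sup'_lt_iff]
      intro i hi
      rw [Finset.mem_range] at hi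
      rcases lt_or_eq_of_le (Nat.lt_succ_iff.mp hi) with h | h
      · exact key i j h h2
      · subst h; have : (0:ℤ) < r := by linarith
        nlinarith
    omega
  have hc_lt_Z : ∀ j, j < n → c j + 1 ≤ Z := by
    intro j hj
    have : c j < Z := by
      rw [hcdef, Finset.sup'_lt_iff]
      intro i hi
      rw [Finset.mem_range] at hi
      have := key i n (by omega) le_rfl
      rw [hZdef]; linarith
    omega
  -- rational setup
  have hnQ : (0 : ℚ) < (n : ℚ) := by positivity
  have hZQ : (0 : ℚ) < (Z : ℚ) := by exact_mod_cast hZpos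
  set W : ℕ → ℚ := fun j =>
    if j = 0 then 0 else if n ≤ j then 1 else ((c j : ℚ) + (j : ℚ) / (n : ℚ)) / (Z : ℚ)
    with hWdef
  have hW0 : W 0 = 0 := by simp [hWdef]
  have hWn : W n = 1 := by
    simp only [hWdef]
    rw [if_neg (by omega), if_pos le_rfl]
  have hWeq : ∀ j, 1 ≤ j → j < n → W j = ((c j : ℚ) + (j : ℚ) / (n : ℚ)) / (Z : ℚ) := by
    intro j h1 h2
    simp only [hWdef]
    rw [if_neg (by omega), if_neg (by omega)]
  have hnum_lt_Z : ∀ j, 1 ≤ j → j < n → (c j : ℚ) + (j : ℚ) / (n : ℚ) < (Z : ℚ) := by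
    intro j h1 h2
    have h3 : (c j : ℚ) + 1 ≤ (Z : ℚ) := by exact_mod_cast hc_lt_Z j h2
    have h4 : (j : ℚ) / (n : ℚ) < 1 := by
      rw [div_lt_one hnQ]; exact_mod_cast h2
    linarith
  have hWlt : ∀ i j : ℕ, i < j → j ≤ n → W i < W j := by
    intro i j hij hjn
    rcases Nat.eq_zero_or_pos i with hi0 | hi1
    · subst hi0
      rw [hW0]
      rcases eq_or_lt_of_le hjn with h | h
      · subst h; rw [hWn]; norm_num
      · rw [hWeq j (by omega) h]
        have := hc_nonneg j
        have hj0 : (0:ℚ) < (j:ℚ) := by exact_mod_cast hij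
        positivity
    · have hin : i < n := by omega
      rw [hWeq i hi1 hin]
      rcases eq_or_lt_of_le hjn with h | h
      · subst h; rw [hWn]
        rw [div_lt_one hZQ]
        exact hnum_lt_Z i hi1 hin
      · rw [hWeq j (by omega) h]
        have h1 : (c i : ℚ) ≤ (c j : ℚ) := by exact_mod_cast hc_mono i j (le_of_lt hij)
        have hijQ : (i : ℚ) < (j : ℚ) := by exact_mod_cast hij
        have h2 : (i : ℚ) / (n : ℚ) < (j : ℚ) / (n : ℚ) := by
          rw [div_lt_div_iff₀ hnQ hnQ]; nlinarith
        rw [div_lt_div_iff₀ hZQ hZQ]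
        nlinarith
  have hWle1 : ∀ j, j ≤ n → W j ≤ 1 := by
    intro j hj
    rcases eq_or_lt_of_le hj with h | h
    · subst h; rw [hWn]
    · rw [← hWn]; exact le_of_lt (hWlt j n h le_rfl)
  -- telescoping
  have tel : ∀ j, ∑ i ∈ Finset.Icc 1 j, (W i - W (i - 1)) = W j := by
    intro j
    induction j with
    | zero => simp [hW0]
    | succ k ih =>
      rw [Finset.sum_Icc_succ_top (by omega)]
      simp only [Nat.add_sub_cancel]
      rw [ih]; ring
  refine ⟨fun i => W i - W (i - 1), ?_, ?_, ?_⟩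
  · intro i h1 h2
    refine ⟨?_, ?_⟩
    · show 0 < W i - W (i - 1)
      have : W (i - 1) < W i := hWlt (i - 1) i (by omega) h2
      linarith
    · show W i - W (i - 1) < 1
      rcases lt_or_eq_of_le h2 with hin | hin
      · have hWi : W i < 1 := by rw [← hWn]; exact hWlt i n hin le_rfl
        have hnn : 0 ≤ W (i - 1) := by
          rcases Nat.eq_zero_or_pos (i - 1) with h0 | h0
          · rw [h0, hW0]
          · exact le_of_lt (by rw [← hW0]; exact hWlt 0 (i - 1) h0 (by omega))
        linarith
      · have hpos : 0 < W (i - 1) := by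
          rw [← hW0]; exact hWlt 0 (i - 1) (by omega) (by omega)
        have := hWle1 i h2
        linarith
  · rw [tel n, hWn]
  · intro j h1 h2
    have hjn : j < n := by omega
    rw [tel j, hXZ]
    have hWZ : W j * (Z : ℚ) = (c j : ℚ) + (j : ℚ) / (n : ℚ) := by
      rw [hWeq j h1 hjn]
      field_simp
    rw [hWZ]
    have hSsum : ∀ k, ((S k : ℤ) : ℚ) = ∑ i ∈ Finset.Icc 1 k, (χ i : ℚ) := by
      intro k; rw [hSdef]; push_cast; ring
    rw [← hSsum (j - 1)]
    have hSstep : S j = S (j - 1) + χ j := by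
      obtain ⟨k, hk⟩ : ∃ k, j = k + 1 := ⟨j - 1, by omega⟩
      subst hk
      show (∑ i ∈ Finset.Icc 1 (k + 1), χ i)
          = (∑ i ∈ Finset.Icc 1 (k + 1 - 1), χ i) + χ (k + 1)
      rw [Nat.add_sub_cancel, Finset.sum_Icc_succ_top (Nat.le_add_left 1 k)]
    have hlow : (S j : ℚ) - (r : ℚ) * (j : ℚ) ≤ (c j : ℚ) := by
      exact_mod_cast hc_mem j j le_rfl
    have hup : (c j : ℚ) + 1 ≤ (S j : ℚ) - (r : ℚ) * ((j : ℚ) - 1) := by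
      exact_mod_cast hc_lt_b j h1 (by omega)
    have hdiv1 : (0 : ℚ) < (j : ℚ) / (n : ℚ) := by
      have : (0:ℚ) < (j:ℚ) := by exact_mod_cast h1
      positivity
    have hdiv2 : (j : ℚ) / (n : ℚ) < 1 := by
      rw [div_lt_one hnQ]; exact_mod_cast hjn
    have hSQ : (S j : ℚ) = (S (j-1) : ℚ) + (χ j : ℚ) := by exact_mod_cast hSstep
    constructor
    · linarith
    · linarith
end
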